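/- Let A ∈ ℝ^{2n×2n}, let x_1, …, x_n ∈ ℝ^{2n} be linearly independent vectors spanning a Lagrangian subspace, i.e. x_iᵀ J x_j = 0 for all i, j, let Ĥ := X_R X_L⁺ + Jᵀ (X_R X_L⁺)ᵀ J, and let X_L^⊥ ∈ ℝ^{2n×(n+1)} have columns forming an orthonormal basis of span{x_1,…,x_{n-1}}^⊥. Define S := -(1/2)[ (X_L^⊥)ᵀ J (Ĥ - A) X_L^⊥ + (X_L^⊥)ᵀ (Ĥ - A)ᵀ J X_L^⊥ ] and H := Ĥ + Jᵀ X_L^⊥ S (X_L^⊥)ᵀ. Then ‖H - A‖_F ≤ ‖H' - A‖_F for every skew-Hamiltonian matrix H' ∈ ℝ^{2n×2n} satisfying H' x_k = x_{k+1} for all k = 1, …, n-1. -/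
import Mathlib

open Matrix

noncomputable section

/-- The canonical skew-symmetric matrix `J = [[0, I],[-I, 0]]`. -/
def Jmat (n : ℕ) : Matrix (Fin n ⊕ Fin n) (Fin n ⊕ Fin n) ℝ :=
  Matrix.fromBlocks 0 1 (-1) 0

/-- A matrix `H` is skew-Hamiltonian if `Jᵀ Hᵀ J = H`. -/
def IsSkewHamiltonian {n : ℕ} (H : Matrix (Fin n ⊕ Fin n) (Fin n ⊕ Fin n) ℝ) : Prop :=
  (Jmat n)ᵀ * Hᵀ * Jmat n = H

/-- `X_L = [x_1 ⋯ x_{n-1}]`. -/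
def XL {n : ℕ} (x : Fin n → (Fin n ⊕ Fin n) → ℝ) :
    Matrix (Fin n ⊕ Fin n) (Fin (n - 1)) ℝ :=
  Matrix.of fun i j => x ⟨j.1, lt_of_lt_of_le j.2 (Nat.sub_le n 1)⟩ i

/-- `X_R = [x_2 ⋯ x_n]`. -/
def XR {n : ℕ} (x : Fin n → (Fin n ⊕ Fin n) → ℝ) :
    Matrix (Fin n ⊕ Fin n) (Fin (n - 1)) ℝ :=
  Matrix.of fun i j => x ⟨j.1 + 1, by have := j.2; omega⟩ i

/-- The Moore–Penrose pseudoinverse `X_L⁺ = (X_Lᵀ X_L)⁻¹ X_Lᵀ` of `X_L`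
(for `X_L` with linearly independent columns). -/
def XLpinv {n : ℕ} (x : Fin n → (Fin n ⊕ Fin n) → ℝ) :
    Matrix (Fin (n - 1)) (Fin n ⊕ Fin n) ℝ :=
  ((XL x)ᵀ * XL x)⁻¹ * (XL x)ᵀ

/-- `Ĥ = X_R X_L⁺ + Jᵀ (X_R X_L⁺)ᵀ J`. -/
def Hhat {n : ℕ} (x : Fin n → (Fin n ⊕ Fin n) → ℝ) :
    Matrix (Fin n ⊕ Fin n) (Fin n ⊕ Fin n) ℝ :=
  XR x * XLpinv x + (Jmat n)ᵀ * (XR x * XLpinv x)ᵀ * Jmat n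

/-- `H` realizes the Krylov relations `H x_k = x_{k+1}`, `k = 1, …, n-1`. -/
def KrylovRel {n : ℕ} (H : Matrix (Fin n ⊕ Fin n) (Fin n ⊕ Fin n) ℝ)
    (x : Fin n → (Fin n ⊕ Fin n) → ℝ) : Prop :=
  ∀ k : Fin (n - 1), H *ᵥ x ⟨k.1, lt_of_lt_of_le k.2 (Nat.sub_le n 1)⟩
    = x ⟨k.1 + 1, by have := k.2; omega⟩

/-- The Frobenius norm of a real matrix. -/
def frobNorm {m m' : Type*} [Fintype m] [Fintype m'] (M : Matrix m m' ℝ) : ℝ :=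
  Real.sqrt (∑ i, ∑ j, (M i j) ^ 2)

/- ### Auxiliary lemmas -/

lemma Jmat_transpose (n : ℕ) : (Jmat n)ᵀ = -Jmat n := by
  rw [Jmat, Matrix.fromBlocks_transpose, Matrix.fromBlocks_neg]; norm_num

lemma Jmat_mul_Jmat (n : ℕ) : Jmat n * Jmat n = -1 := by
  rw [Jmat, Matrix.fromBlocks_multiply, ← Matrix.fromBlocks_one, Matrix.fromBlocks_neg]
  norm_num

lemma Jmat_t_mul (n : ℕ) : (Jmat n)ᵀ * Jmat n = 1 := by
  rw [Jmat_transpose, Matrix.neg_mul, Jmat_mul_Jmat]; simp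

lemma Jmat_mul_t (n : ℕ) : Jmat n * (Jmat n)ᵀ = 1 := by
  rw [Jmat_transpose, Matrix.mul_neg, Jmat_mul_Jmat]; simp

lemma Jmat_t_mul_t (n : ℕ) : (Jmat n)ᵀ * (Jmat n)ᵀ = -1 := by
  rw [← Matrix.transpose_mul, Jmat_mul_Jmat]; simp

lemma trace_symm_mul_skew {m : Type*} [Fintype m] (M E : Matrix m m ℝ)
    (hM : Mᵀ = M) (hE : Eᵀ = -E) : Matrix.trace (M * E) = 0 := by
  have h : Matrix.trace (M * E) = - Matrix.trace (M * E) := by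
    conv_lhs => rw [← Matrix.trace_transpose, Matrix.transpose_mul, hM, hE,
      Matrix.neg_mul, Matrix.trace_neg, Matrix.trace_mul_comm]
  linarith

lemma trace_transpose_mul_self_nonneg {m m' : Type*} [Fintype m] [Fintype m']
    (M : Matrix m m' ℝ) : 0 ≤ Matrix.trace (Mᵀ * M) := by
  rw [Matrix.trace]
  refine Finset.sum_nonneg fun j _ => ?_
  rw [Matrix.diag_apply, Matrix.mul_apply]
  exact Finset.sum_nonneg fun i _ => by simpa using mul_self_nonneg (M i j)

lemma frobNorm_eq_trace {m m' : Type*} [Fintype m] [Fintype m'] (M : Matrix m m' ℝ) :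
    frobNorm M = Real.sqrt (Matrix.trace (Mᵀ * M)) := by
  unfold frobNorm
  congr 1
  rw [Finset.sum_comm]
  simp [Matrix.trace, Matrix.mul_apply, sq]

lemma gram_isUnit {m k : Type*} [Fintype m] [Fintype k] [DecidableEq k] (X : Matrix m k ℝ)
    (h : LinearIndependent ℝ (fun j => fun i => X i j)) : IsUnit (Xᵀ * X) := by
  rw [← Matrix.mulVec_injective_iff_isUnit]
  have key : ∀ c, (Xᵀ * X) *ᵥ c = 0 → c = 0 := by
    intro c hc
    have h2 : (X *ᵥ c) ⬝ᵥ (X *ᵥ c) = 0 := by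
      rw [Matrix.dotProduct_mulVec, ← Matrix.mulVec_transpose, Matrix.mulVec_mulVec, hc,
        zero_dotProduct]
    have h3 : X *ᵥ c = 0 := by
      ext i
      have := Finset.sum_eq_zero_iff_of_nonneg (fun i _ => mul_self_nonneg ((X *ᵥ c) i)) |>.mp h2
      simpa using mul_self_eq_zero.mp (this i (Finset.mem_univ i))
    have h4 := Fintype.linearIndependent_iff.mp h c ?_
    · ext j; exact h4 j
    · funext i
      have := congrFun h3 i
      simpa [Matrix.mulVec, dotProduct, mul_comm] using this
  intro c d hcd
  have h0 : (Xᵀ * X) *ᵥ (c - d) = 0 := by rw [Matrix.mulVec_sub, hcd, sub_self]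
  have := key _ h0
  funext j
  have := congrFun this j
  simp at this
  linarith [this]

/-- If every column of `C` is in the range of `P` and `Pᵀ P = 1`, then `P Pᵀ C = C`. -/
lemma col_fix {m p q : Type*} [Fintype m] [Fintype p] [Fintype q] [DecidableEq p]
    (P : Matrix m p ℝ) (hON : Pᵀ * P = 1) (C : Matrix m q ℝ)
    (h : ∀ j, ∃ w, P *ᵥ w = fun i => C i j) : P * (Pᵀ * C) = C := by
  have hC : C = P * (Matrix.of fun l j => (h j).choose l) := by
    ext i j
    have := congrFun (h j).choose_spec i
    simp only [Matrix.mulVec, dotProduct] at this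
    simp only [Matrix.mul_apply, Matrix.of_apply]
    exact this.symm
  rw [hC, ← Matrix.mul_assoc Pᵀ, hON, Matrix.one_mul]

lemma abstract_key {d p : Type*} [Fintype d] [Fintype p] [DecidableEq d] [DecidableEq p]
    (Jm : Matrix d d ℝ) (X : Matrix d p ℝ) (B : Matrix d d ℝ) (E : Matrix p p ℝ)
    (hJ : Jm * Jmᵀ = 1) (hX : Xᵀ * X = 1)
    (hMsym : (Xᵀ * (Jm * B) * X)ᵀ = Xᵀ * (Jm * B) * X)
    (hE : Eᵀ = -E) :
    Matrix.trace ((B + Jmᵀ * (X * E * Xᵀ))ᵀ * (B + Jmᵀ * (X * E * Xᵀ)))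
      = Matrix.trace (Bᵀ * B) + Matrix.trace (Eᵀ * E) := by
  set F := Jmᵀ * (X * E * Xᵀ) with hF
  have hcross : Matrix.trace (Bᵀ * F) = 0 := by
    have e1 : Bᵀ * F = (Bᵀ * Jmᵀ * X * E) * Xᵀ := by simp [hF, Matrix.mul_assoc]
    rw [e1, Matrix.trace_mul_comm]
    have e2 : Xᵀ * (Bᵀ * Jmᵀ * X * E) = ((Xᵀ * (Jm * B) * X)ᵀ) * E := by
      simp [Matrix.transpose_mul, Matrix.mul_assoc]
    rw [e2, hMsym]
    exact trace_symm_mul_skew _ _ hMsym hE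
  have hsq : Matrix.trace (Fᵀ * F) = Matrix.trace (Eᵀ * E) := by
    have e1 : Fᵀ * F = X * (Eᵀ * (Xᵀ * (Jm * (Jmᵀ * (X * (E * Xᵀ)))))) := by
      simp [hF, Matrix.transpose_mul, Matrix.mul_assoc]
    rw [e1, ← Matrix.mul_assoc Jm, hJ, Matrix.one_mul, ← Matrix.mul_assoc Xᵀ, hX,
      Matrix.one_mul]
    have e2 : X * (Eᵀ * (E * Xᵀ)) = (X * (Eᵀ * E)) * Xᵀ := by simp [Matrix.mul_assoc]
    rw [e2, Matrix.trace_mul_comm, ← Matrix.mul_assoc Xᵀ, hX, Matrix.one_mul]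
  have hcross' : Matrix.trace (Fᵀ * B) = 0 := by
    rw [← Matrix.trace_transpose (Fᵀ * B), Matrix.transpose_mul, Matrix.transpose_transpose,
      hcross]
  rw [Matrix.transpose_add, Matrix.add_mul, Matrix.mul_add, Matrix.mul_add,
    Matrix.trace_add, Matrix.trace_add, Matrix.trace_add, hcross, hcross', hsq]
  ring

set_option maxHeartbeats 2000000 in
/-- The skew-Hamiltonian matrix `H = Ĥ + Jᵀ X_L^⊥ S (X_L^⊥)ᵀ` with
`S = -(1/2)[(X_L^⊥)ᵀ J (Ĥ - A) X_L^⊥ + (X_L^⊥)ᵀ (Ĥ - A)ᵀ J X_L^⊥]` is the best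
Frobenius-norm approximation to `A` among all skew-Hamiltonian matrices realizing the
Krylov relations `H' x_k = x_{k+1}`. -/
theorem best_skewHamiltonian_approximation {n : ℕ}
    (A : Matrix (Fin n ⊕ Fin n) (Fin n ⊕ Fin n) ℝ)
    (x : Fin n → (Fin n ⊕ Fin n) → ℝ)
    (hLI : LinearIndependent ℝ x)
    (hLag : ∀ i j : Fin n, x i ⬝ᵥ (Jmat n *ᵥ x j) = 0)
    (XLperp : Matrix (Fin n ⊕ Fin n) (Fin (n + 1)) ℝ)
    (hON : XLperpᵀ * XLperp = 1)
    (hperp : ∀ v : (Fin n ⊕ Fin n) → ℝ,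
      (∃ w : Fin (n + 1) → ℝ, XLperp *ᵥ w = v) ↔
      ∀ k : Fin (n - 1), v ⬝ᵥ x ⟨k.1, lt_of_lt_of_le k.2 (Nat.sub_le n 1)⟩ = 0)
    (S : Matrix (Fin (n + 1)) (Fin (n + 1)) ℝ)
    (hS : S = -(1 / 2 : ℝ) • (XLperpᵀ * Jmat n * (Hhat x - A) * XLperp
      + XLperpᵀ * (Hhat x - A)ᵀ * Jmat n * XLperp))
    (H : Matrix (Fin n ⊕ Fin n) (Fin n ⊕ Fin n) ℝ)
    (hH : H = Hhat x + (Jmat n)ᵀ * (XLperp * S * XLperpᵀ)) :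
    ∀ H' : Matrix (Fin n ⊕ Fin n) (Fin n ⊕ Fin n) ℝ,
      IsSkewHamiltonian H' → KrylovRel H' x →
      frobNorm (H - A) ≤ frobNorm (H' - A) := by
  intro H' hSH hKR
  -- the Gram matrix of X_L is invertible
  have hcols : LinearIndependent ℝ (fun j : Fin (n - 1) => fun i => (XL x) i j) := by
    have hf : Function.Injective
        (fun j : Fin (n - 1) => (⟨j.1, lt_of_lt_of_le j.2 (Nat.sub_le n 1)⟩ : Fin n)) := by
      intro a b hab
      simpa [Fin.ext_iff] using congrArg Fin.val hab
    exact hLI.comp _ hf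
  have hGram : IsUnit ((XL x)ᵀ * XL x) := gram_isUnit _ hcols
  have hpinv : XLpinv x * XL x = 1 := by
    rw [XLpinv, Matrix.mul_assoc]
    exact Matrix.nonsing_inv_mul _ ((Matrix.isUnit_iff_isUnit_det _).mp hGram)
  -- X_Rᵀ (J X_L) = 0 by the Lagrangian condition
  have hXRJXL : (XR x)ᵀ * (Jmat n * XL x) = 0 := by
    ext j k
    have := hLag ⟨j.1 + 1, by have := j.2; omega⟩ ⟨k.1, lt_of_lt_of_le k.2 (Nat.sub_le n 1)⟩
    simpa [Matrix.mul_apply, XR, XL, Matrix.mulVec, dotProduct] using this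
  -- Hhat X_L = X_R
  have hHhatXL : Hhat x * XL x = XR x := by
    rw [Hhat, Matrix.add_mul, Matrix.mul_assoc, hpinv, Matrix.mul_one]
    have h2 : (Jmat n)ᵀ * (XR x * XLpinv x)ᵀ * Jmat n * XL x = 0 := by
      simp only [Matrix.transpose_mul, Matrix.mul_assoc]
      rw [hXRJXL]
      simp
    rw [h2, add_zero]
  -- H' X_L = X_R
  have hH'XL : H' * XL x = XR x := by
    ext i k
    have := congrFun (hKR k) i
    simpa [Matrix.mul_apply, XL, XR, Matrix.mulVec, dotProduct] using this
  set D := H' - Hhat x with hD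
  have hDXL : D * XL x = 0 := by rw [hD, Matrix.sub_mul, hH'XL, hHhatXL, sub_self]
  -- Hhat is skew-Hamiltonian
  have hHhatSH : (Jmat n)ᵀ * (Hhat x)ᵀ * Jmat n = Hhat x := by
    rw [Hhat]
    simp only [Matrix.transpose_add, Matrix.transpose_mul, Matrix.transpose_transpose,
      Matrix.mul_add, Matrix.add_mul, Matrix.mul_assoc]
    rw [Jmat_mul_Jmat, ← Matrix.mul_assoc ((Jmat n)ᵀ) ((Jmat n)ᵀ), Jmat_t_mul_t]
    simp only [Matrix.neg_mul, Matrix.mul_neg, Matrix.mul_one, Matrix.one_mul, neg_neg]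
    exact add_comm _ _
  -- D is skew-Hamiltonian
  have hDSH : (Jmat n)ᵀ * Dᵀ * Jmat n = D := by
    rw [hD, Matrix.transpose_sub, Matrix.mul_sub, Matrix.sub_mul, hHhatSH]
    rw [IsSkewHamiltonian] at hSH
    rw [hSH]
  -- J D is skew-symmetric
  have hDt : Dᵀ = Jmat n * D * (Jmat n)ᵀ := by
    conv_rhs => rw [← hDSH]
    simp only [Matrix.mul_assoc]
    rw [Jmat_mul_t, Matrix.mul_one, ← Matrix.mul_assoc, Jmat_mul_t, Matrix.one_mul]
  have hJDskew : (Jmat n * D)ᵀ = -(Jmat n * D) := by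
    rw [Matrix.transpose_mul, hDt]
    simp only [Matrix.mul_assoc]
    rw [Jmat_t_mul_t]
    simp [Matrix.mul_assoc]
  -- columns of J D and (J D)ᵀ are orthogonal to the x_k
  have hJDXLt : (Jmat n * D)ᵀ * XL x = 0 := by
    rw [hJDskew, Matrix.neg_mul, Matrix.mul_assoc, hDXL, Matrix.mul_zero, neg_zero]
  have hJDXL : (Jmat n * D) * XL x = 0 := by
    rw [Matrix.mul_assoc, hDXL, Matrix.mul_zero]
  have hJDl : XLperp * (XLperpᵀ * (Jmat n * D)) = Jmat n * D := by
    refine col_fix XLperp hON _ fun j => (hperp _).mpr fun k => ?_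
    have := congrFun (congrFun hJDXLt j) k
    simpa [Matrix.mul_apply, dotProduct, XL, mul_comm] using this
  have hJDr : XLperp * (XLperpᵀ * (Jmat n * D)ᵀ) = (Jmat n * D)ᵀ := by
    refine col_fix XLperp hON _ fun j => (hperp _).mpr fun k => ?_
    have := congrFun (congrFun hJDXL j) k
    simpa [Matrix.mul_apply, dotProduct, XL, mul_comm] using this
  have hr : Jmat n * D = (Jmat n * D) * (XLperp * XLperpᵀ) := by
    have := congrArg Matrix.transpose hJDr
    simp only [Matrix.transpose_mul, Matrix.transpose_transpose] at this
    conv_lhs => rw [← this]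
    simp [Matrix.mul_assoc]
  set K := XLperpᵀ * (Jmat n * D) * XLperp with hK
  have hJDK : Jmat n * D = XLperp * K * XLperpᵀ := by
    conv_lhs => rw [← hJDl, hr]
    simp [hK, Matrix.mul_assoc]
  have hD_eq : D = (Jmat n)ᵀ * (XLperp * K * XLperpᵀ) := by
    rw [← hJDK, ← Matrix.mul_assoc, Jmat_t_mul, Matrix.one_mul]
  have hKskew : Kᵀ = -K := by
    rw [hK]
    simp only [Matrix.transpose_mul, Matrix.transpose_transpose, ← Matrix.mul_assoc]
    rw [Matrix.mul_assoc XLperpᵀ, ← Matrix.transpose_mul]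
    rw [show ((Jmat n * D))ᵀ = -(Jmat n * D) from hJDskew]
    simp [Matrix.mul_assoc]
  -- S is skew-symmetric
  have ht1 : (XLperpᵀ * Jmat n * (Hhat x - A) * XLperp)ᵀ
      = -(XLperpᵀ * (Hhat x - A)ᵀ * Jmat n * XLperp) := by
    simp only [Matrix.transpose_mul, Matrix.transpose_transpose, Jmat_transpose,
      Matrix.mul_neg, Matrix.neg_mul, Matrix.mul_assoc]
  have ht2 : (XLperpᵀ * (Hhat x - A)ᵀ * Jmat n * XLperp)ᵀ
      = -(XLperpᵀ * Jmat n * (Hhat x - A) * XLperp) := by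
    simp only [Matrix.transpose_mul, Matrix.transpose_transpose, Jmat_transpose,
      Matrix.mul_neg, Matrix.neg_mul, Matrix.mul_assoc]
  have hSskew : Sᵀ = -S := by
    rw [hS, Matrix.transpose_smul, Matrix.transpose_add, ht1, ht2]
    simp only [neg_smul, smul_add, smul_neg, neg_neg, neg_add]
    exact add_comm _ _
  set E := K - S with hE
  have hEskew : Eᵀ = -E := by
    rw [hE, Matrix.transpose_sub, hKskew, hSskew]
    abel
  -- H' - A = (H - A) + Jᵀ (XLperp E XLperpᵀ)
  have hBF : H' - A = (H - A) + (Jmat n)ᵀ * (XLperp * E * XLperpᵀ) := by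
    have h1 : H' = Hhat x + (Jmat n)ᵀ * (XLperp * K * XLperpᵀ) := by
      rw [← hD_eq, hD]; abel
    rw [h1, hH, hE]
    simp only [Matrix.sub_mul, Matrix.mul_sub, Matrix.mul_add, Matrix.add_mul]
    abel
  -- M := XLperpᵀ (J (H - A)) XLperp is symmetric
  set N := XLperpᵀ * Jmat n * (Hhat x - A) * XLperp with hN
  set N₂ := XLperpᵀ * (Hhat x - A)ᵀ * Jmat n * XLperp with hN₂
  have hJB : Jmat n * (H - A) = Jmat n * (Hhat x - A) + XLperp * S * XLperpᵀ := by
    rw [hH]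
    have : (Hhat x + (Jmat n)ᵀ * (XLperp * S * XLperpᵀ)) - A
        = (Hhat x - A) + (Jmat n)ᵀ * (XLperp * S * XLperpᵀ) := by abel
    rw [this, Matrix.mul_add, ← Matrix.mul_assoc, Jmat_mul_t, Matrix.one_mul]
  have hM : XLperpᵀ * (Jmat n * (H - A)) * XLperp = N + S := by
    rw [hJB, Matrix.mul_add, Matrix.add_mul]
    congr 1
    · rw [hN]; simp [Matrix.mul_assoc]
    · simp only [Matrix.mul_assoc]
      rw [hON, Matrix.mul_one, ← Matrix.mul_assoc, hON, Matrix.one_mul]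
  have hNt : Nᵀ = -N₂ := by
    rw [hN, hN₂]
    simp only [Matrix.transpose_mul, Matrix.transpose_transpose, Jmat_transpose,
      Matrix.mul_neg, Matrix.neg_mul, Matrix.mul_assoc]
  have hMsym : (XLperpᵀ * (Jmat n * (H - A)) * XLperp)ᵀ
      = XLperpᵀ * (Jmat n * (H - A)) * XLperp := by
    rw [hM, Matrix.transpose_add, hNt, hSskew, hS]
    module
  have key := abstract_key (Jmat n) XLperp (H - A) E (Jmat_mul_t n) hON hMsym hEskew
  rw [frobNorm_eq_trace, frobNorm_eq_trace, hBF, key]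
  exact Real.sqrt_le_sqrt (by linarith [trace_transpose_mul_self_nonneg E])
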